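/- The Harish–Chandra c-function for Hⁿ, c(λ) = (Γ(2ρ)/Γ(ρ)) · Γ(iλ)/Γ(iλ+ρ) with ρ = (n−1)/2, satisfies in odd dimension n the explicit Plancherel density formula |c(λ)|^{−2} = (π/(2^{2n−4} Γ(n/2)²)) ∏_{j=0}^{(n−3)/2} (λ² + j²) for all real λ ≠ 0. -/

import Mathlib

open Real Complex

lemma gamma_shift (z : ℂ) (hz : ∀ j : ℕ, z + j ≠ 0) (m : ℕ) :
    Complex.Gamma (z + m) = Complex.Gamma z * ∏ j ∈ Finset.range m, (z + j) := by
  induction m with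
  | zero => simp
  | succ k ih =>
    rw [Finset.prod_range_succ, ← mul_assoc, ← ih]
    have h : (z + (↑(k+1) : ℂ)) = (z + k) + 1 := by push_cast; ring
    rw [h, Complex.Gamma_add_one _ (hz k)]
    ring

theorem stmt_10 (n : ℕ) (hn : 3 ≤ n) (hodd : Odd n) (lam : ℝ) (hlam : lam ≠ 0)
    (ρ : ℝ) (hρ : ρ = ((n : ℝ) - 1) / 2)
    (c : ℂ)
    (hc : c = (Complex.Gamma (2 * ρ) / Complex.Gamma (ρ : ℂ)) *
      Complex.Gamma (Complex.I * lam) / Complex.Gamma (Complex.I * lam + ρ)) :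
    (‖c‖ ^ 2)⁻¹ =
      π / (2 ^ (2 * n - 4) * Real.Gamma (n / 2) ^ 2) *
        ∏ j ∈ Finset.range ((n - 3) / 2 + 1), (lam ^ 2 + (j : ℝ) ^ 2) := by
  obtain ⟨m, hm⟩ := hodd
  have hm1 : 1 ≤ m := by omega
  have hρ' : ρ = (m : ℝ) := by rw [hρ, hm]; push_cast; ring
  set z : ℂ := Complex.I * lam with hz_def
  have him : z.im = lam := by simp [hz_def]
  have hz : ∀ j : ℕ, z + (j : ℂ) ≠ 0 := by
    intro j h
    apply hlam
    have := congrArg Complex.im h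
    simpa [him] using this
  have hzne : ∀ k : ℕ, z ≠ -(k : ℂ) := by
    intro k h
    exact hz k (by rw [h]; ring)
  have hGz : Complex.Gamma z ≠ 0 := Complex.Gamma_ne_zero hzne
  -- rewrite c
  have hshift : Complex.Gamma (z + (m : ℂ)) =
      Complex.Gamma z * ∏ j ∈ Finset.range m, (z + j) := gamma_shift z hz m
  set P : ℂ := ∏ j ∈ Finset.range m, (z + j) with hP
  have hPne : P ≠ 0 := Finset.prod_ne_zero_iff.mpr fun j _ => hz j
  have hc' : c = ((Real.Gamma (2 * (m : ℝ)) : ℂ) / (Real.Gamma (m : ℝ) : ℂ)) / P := by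
    rw [hc, hρ', ← Complex.Gamma_ofReal (2 * (m : ℝ)), ← Complex.Gamma_ofReal (m : ℝ)]
    rw [show ((2 : ℂ) * ((m : ℝ) : ℂ)) = (((2 * (m : ℝ) : ℝ)) : ℂ) by push_cast; ring]
    rw [show (z + ((m : ℝ) : ℂ)) = z + (m : ℂ) by norm_cast, hshift]
    field_simp [hGz, hPne]
  -- positivity facts
  have hGm : 0 < Real.Gamma m := Real.Gamma_pos_of_pos (by positivity)
  have hG2m : 0 < Real.Gamma (2 * m) := Real.Gamma_pos_of_pos (by positivity)
  have hGh : 0 < Real.Gamma ((m : ℝ) + 1 / 2) := Real.Gamma_pos_of_pos (by positivity)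
  -- |c|^2
  have habsP : ‖P‖ ^ 2 = ∏ j ∈ Finset.range m, (lam ^ 2 + (j : ℝ) ^ 2) := by
    rw [hP, norm_prod, ← Finset.prod_pow]
    refine Finset.prod_congr rfl fun j _ => ?_
    rw [Complex.sq_norm, Complex.normSq_apply]
    simp [hz_def]
    ring
  have habs : ‖c‖ ^ 2 =
      (Real.Gamma (2 * m) / Real.Gamma m) ^ 2 / ‖P‖ ^ 2 := by
    rw [hc', norm_div, norm_div, div_pow, div_pow]
    congr 1
    rw [Complex.norm_real, Complex.norm_real, Real.norm_eq_abs, Real.norm_eq_abs, abs_of_pos hG2m, abs_of_pos hGm]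
    exact (div_pow _ _ _).symm
  -- index bookkeeping
  have hidx : (n - 3) / 2 + 1 = m := by omega
  have hn2 : (n : ℝ) / 2 = (m : ℝ) + 1 / 2 := by rw [hm]; push_cast; ring
  rw [hidx, habs, habsP, hn2]
  have hprodpos : 0 < ∏ j ∈ Finset.range m, (lam ^ 2 + (j : ℝ) ^ 2) := by
    apply Finset.prod_pos
    intro j _
    positivity
  have hd := Real.Gamma_mul_Gamma_add_half (m : ℝ)
  have key : Real.Gamma m / Real.Gamma (2 * m) =
      (2 : ℝ) ^ ((1 : ℝ) - 2 * m) * Real.sqrt π / Real.Gamma ((m : ℝ) + 1 / 2) := by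
    rw [div_eq_div_iff hG2m.ne' hGh.ne']
    linear_combination hd
  have hpow : ((2 : ℝ) ^ ((1 : ℝ) - 2 * m)) ^ 2 * (2 : ℝ) ^ (2 * n - 4) = 1 := by
    have hcast : ((2 * n - 4 : ℕ) : ℝ) = 4 * (m : ℝ) - 2 := by
      rw [show 2 * n - 4 = 4 * m - 2 by omega, Nat.cast_sub (by omega : 2 ≤ 4 * m)]
      push_cast; ring
    rw [← Real.rpow_natCast 2 (2 * n - 4), hcast, sq, ← Real.rpow_add two_pos,
      ← Real.rpow_add two_pos, show ((1 : ℝ) - 2 * m) + ((1 : ℝ) - 2 * m) + (4 * (m : ℝ) - 2) = 0 by ring,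
      Real.rpow_zero]
  have final : (Real.Gamma m / Real.Gamma (2 * m)) ^ 2 =
      π / (2 ^ (2 * n - 4) * Real.Gamma ((m : ℝ) + 1 / 2) ^ 2) := by
    rw [key, div_pow, mul_pow, Real.sq_sqrt pi_pos.le,
      div_eq_div_iff (by positivity) (by positivity)]
    linear_combination (π * Real.Gamma ((m : ℝ) + 1 / 2) ^ 2) * hpow
  have hBA : (Real.Gamma (2 * m) / Real.Gamma m) ^ 2 =
      ((Real.Gamma m / Real.Gamma (2 * m)) ^ 2)⁻¹ := by
    rw [← inv_pow, inv_div]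
  rw [hBA, div_eq_mul_inv, mul_inv, inv_inv, inv_inv, final]
  try ring
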